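/- Let F ∈ H_Z satisfy M̃(F) = F and p₂(F) ≡ 1 a.e. on 𝕋. Set m₁(z) = z·conj(m₀(−z)), (S₁f)(z) = m₁(z)f(z²), L₀ = S₁(L²(𝕋)) (which equals ker S₀*), V₀(F) = the closure of {π_Z(α)F : α ∈ L²(𝕋)} in H_Z, Vₙ(F) = Ũⁿ(V₀(F)), and Wₙ(F) = Vₙ(F) ⊖ V_{n+1}(F). Then V_{n+1}(F) ⊆ Vₙ(F), C_F(S₀ⁿ L²(𝕋)) = Vₙ(F), and C_F(S₀ⁿ L₀) = Wₙ(F) for all n ≥ 0; moreover C_F is isometric. -/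

import Mathlib

open MeasureTheory Complex Real Filter Topology

noncomputable section

/-- The normalized Haar measure `μ` of the circle `𝕋`, realized on the fundamental
domain `(0, 2π]` of `ℝ` via the identification `z = e^{-iω}`. -/
def muT : Measure ℝ := (ENNReal.ofReal (2 * π))⁻¹ • (volume.restrict (Set.Ioc 0 (2 * π)))

/-- The measure on `𝕋 × [0,1]` underlying the Hilbert space `H_Z` (Zak-transform side). -/
def muZ : Measure (ℝ × ℝ) := muT.prod (volume.restrict (Set.Ioc 0 1))

/-- `L²(𝕋)`. -/
abbrev L2T : Type := MeasureTheory.Lp ℂ 2 muT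

/-- The Hilbert space `H_Z ≃ L²(𝕋 × [0,1])`, the range of the Zak transform. -/
abbrev HZ : Type := MeasureTheory.Lp ℂ 2 muZ

/-- Quasi-periodicity characterizing membership of a function in `H_Z`:
`2π`-periodicity in the `ω`-coordinate and `H(z, x + n) = z^{-n} H(z, x)`,
i.e. `H(ω, x + n) = e^{inω} H(ω, x)`. -/
def QP (H : ℝ × ℝ → ℂ) : Prop :=
  (∀ ω x : ℝ, H (ω + 2 * π, x) = H (ω, x)) ∧
    ∀ (ω x : ℝ) (n : ℤ),
      H (ω, x + (n : ℝ)) = Complex.exp (Complex.I * (n : ℂ) * (ω : ℂ)) * H (ω, x)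

/-- `T = π_Z(m)`, multiplication by `m(z)` on `H_Z`. -/
def IsMulOp (m : ℝ → ℂ) (T : HZ →L[ℂ] HZ) : Prop :=
  ∀ H : HZ, ⇑(T H) =ᵐ[muZ] fun p : ℝ × ℝ => m p.1 * (⇑H) p

/-- `Ut` is the unitary `Ũ` on `H_Z`:
`(ŨH)(z,x) = 2^{-1/2} (H(z², x/2) + z·H(z², (x+1)/2))`, characterized on quasi-periodic
representatives (`z = e^{-iω}`). -/
def IsUt (Ut : HZ ≃ₗᵢ[ℂ] HZ) : Prop :=
  ∀ H : ℝ × ℝ → ℂ, Measurable H → QP H →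
    ∀ hH : MeasureTheory.MemLp H 2 muZ,
      ⇑(Ut (hH.toLp H)) =ᵐ[muZ] fun p : ℝ × ℝ =>
        ((Real.sqrt 2 : ℝ) : ℂ)⁻¹ *
          (H (2 * p.1, p.2 / 2) +
            Complex.exp (-(Complex.I * (p.1 : ℂ))) * H (2 * p.1, (p.2 + 1) / 2))

/-- `S` is the operator `(Sf)(z) = m(z) f(z²)` on `L²(𝕋)`, characterized on
`2π`-periodic representatives. -/
def IsSOp (m : ℝ → ℂ) (S : L2T →L[ℂ] L2T) : Prop :=
  ∀ f : ℝ → ℂ, Measurable f → (∀ ω, f (ω + 2 * π) = f ω) →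
    ∀ hf : MeasureTheory.MemLp f 2 muT,
      ⇑(S (hf.toLp f)) =ᵐ[muT] fun ω : ℝ => m ω * f (2 * ω)

namespace MRAaux

open Set

lemma cT_ne_zero : (ENNReal.ofReal (2 * π))⁻¹ ≠ 0 := by
  simp [ENNReal.inv_ne_zero, ENNReal.ofReal_ne_top, ENNReal.mul_eq_top]

lemma cT_ne_top : (ENNReal.ofReal (2 * π))⁻¹ ≠ ⊤ := by
  simp [ENNReal.inv_ne_top, ENNReal.ofReal_pos, pi_pos]

lemma ae_smul_iff {c : ENNReal} (hc : c ≠ 0) {μ : Measure ℝ} {p : ℝ → Prop} :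
    (∀ᵐ x ∂c • μ, p x) ↔ (∀ᵐ x ∂μ, p x) := by
  constructor <;> intro h <;> rw [ae_iff] at h ⊢
  · rw [Measure.smul_apply, smul_eq_mul, mul_eq_zero] at h; tauto
  · rw [Measure.smul_apply, smul_eq_mul, h, mul_zero]

lemma ae_muT_iff_ae_restrict {P : ℝ → Prop} :
    (∀ᵐ ω ∂muT, P ω) ↔ (∀ᵐ ω ∂(volume.restrict (Ioc 0 (2*π))), P ω) :=
  ae_smul_iff cT_ne_zero

lemma muT_ac : muT ≪ (volume : Measure ℝ) := by
  intro s hs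
  simp only [muT, Measure.smul_apply, smul_eq_mul]
  rw [Measure.restrict_apply' measurableSet_Ioc]
  have : volume (s ∩ Ioc 0 (2*π)) = 0 :=
    le_antisymm (le_trans (measure_mono (Set.inter_subset_left)) hs.le) bot_le
  simp [this]

lemma ae_muT_of_ae_vol {P : ℝ → Prop} (h : ∀ᵐ ω ∂(volume : Measure ℝ), P ω) :
    ∀ᵐ ω ∂muT, P ω := muT_ac.ae_le h

/-- periodization -/
def per (g : ℝ → ℂ) (ω : ℝ) : ℂ := g (ω - 2 * π * ⌊ω / (2 * π)⌋)

lemma per_measurable {g : ℝ → ℂ} (hg : Measurable g) : Measurable (per g) := by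
  apply hg.comp
  exact measurable_id.sub ((measurable_from_top.comp (measurable_id.div_const _).floor).const_mul _)

lemma per_periodic (g : ℝ → ℂ) (ω : ℝ) : per g (ω + 2 * π) = per g ω := by
  have h2π : (2 * π) ≠ 0 := by positivity
  unfold per
  have : (ω + 2 * π) / (2 * π) = ω / (2 * π) + 1 := by field_simp
  rw [this, Int.floor_add_one]
  push_cast
  ring_nf

lemma per_ae_eq {g : ℝ → ℂ} : per g =ᵐ[muT] g := by
  rw [Filter.EventuallyEq, ae_muT_iff_ae_restrict, ae_restrict_iff' measurableSet_Ioc]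
  have h1 : ∀ᵐ ω ∂(volume : Measure ℝ), ω ≠ 2 * π := by
    have hs : {ω : ℝ | ¬ ω ≠ 2 * π} = {2 * π} := by ext; simp
    rw [ae_iff, hs]
    exact Real.volume_singleton
  filter_upwards [h1] with ω hω hmem
  have h2π : (0:ℝ) < 2 * π := by positivity
  have hlt : ω < 2 * π := lt_of_le_of_ne hmem.2 hω
  have h0 : ⌊ω / (2 * π)⌋ = 0 := by
    rw [Int.floor_eq_zero_iff]
    constructor
    · exact div_nonneg hmem.1.le h2π.le
    · rw [div_lt_one h2π]; exact hlt
  simp [per, h0]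


lemma toLp_eq' {α : Type*} [MeasurableSpace α] {μ : Measure α} {g : α → ℂ}
    (hg : MeasureTheory.MemLp g 2 μ) {f : MeasureTheory.Lp ℂ 2 μ} (hfg : ⇑f =ᵐ[μ] g) :
    hg.toLp g = f :=
  Lp.ext (hg.coeFn_toLp.trans hfg.symm)

lemma exists_rep (f : L2T) :
    ∃ g : ℝ → ℂ, Measurable g ∧ (∀ ω, g (ω + 2 * π) = g ω) ∧ ⇑f =ᵐ[muT] g := by
  have h := (Lp.memLp f).aestronglyMeasurable
  exact ⟨per h.mk, per_measurable h.stronglyMeasurable_mk.measurable, per_periodic _,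
    h.ae_eq_mk.trans per_ae_eq.symm⟩

lemma S_repr {m : ℝ → ℂ} {S : L2T →L[ℂ] L2T} (hS : IsSOp m S) (f : L2T) :
    ∃ g : ℝ → ℂ, Measurable g ∧ (∀ ω, g (ω + 2 * π) = g ω) ∧ ⇑f =ᵐ[muT] g ∧
      ⇑(S f) =ᵐ[muT] fun ω => m ω * g (2 * ω) := by
  obtain ⟨g, hgm, hgp, hfg⟩ := exists_rep f
  have hgmem : MeasureTheory.MemLp g 2 muT := (Lp.memLp f).ae_eq hfg
  have h2 := hS g hgm hgp hgmem
  rw [toLp_eq' hgmem hfg] at h2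
  exact ⟨g, hgm, hgp, hfg, h2⟩

lemma lint_half (ψ : ℝ → ENNReal) (hψ : Measurable ψ) :
    ∫⁻ u in Ioc (0:ℝ) (2*π), ψ (u / 2) = 2 * ∫⁻ x in Ioc (0:ℝ) π, ψ x := by
  have h2 : ((2:ℝ)) ≠ 0 := two_ne_zero
  have hs := setLIntegral_map (μ := (volume : Measure ℝ)) (s := Ioc (0:ℝ) (2*π))
      measurableSet_Ioc (f := fun u => ψ (u / 2)) (g := fun x => (2:ℝ) * x)
      (hψ.comp (measurable_id.div_const 2)) (measurable_const_mul 2)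
  rw [Real.map_volume_mul_left h2, Measure.restrict_smul, lintegral_smul_measure] at hs
  have hpre : (fun x : ℝ => 2 * x) ⁻¹' Ioc 0 (2*π) = Ioc 0 π := by
    rw [Set.preimage_const_mul_Ioc₀ _ _ (by norm_num : (0:ℝ) < 2)]
    norm_num
  rw [hpre] at hs
  have hsimp : ∀ x : ℝ, ψ ((2 * x) / 2) = ψ x := fun x => by
    rw [mul_div_cancel_left₀ _ h2]
  simp only [hsimp] at hs
  rw [← hs, smul_eq_mul, ← mul_assoc]
  have hone : (2 : ENNReal) * ENNReal.ofReal |(2:ℝ)⁻¹| = 1 := by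
    rw [abs_of_pos (by norm_num : (0:ℝ) < 2⁻¹)]
    rw [ENNReal.ofReal_inv_of_pos (by norm_num : (0:ℝ) < 2)]
    norm_num
    exact ENNReal.mul_inv_cancel (by norm_num) (by norm_num)
  rw [hone, one_mul]

lemma lint_shift (ψ : ℝ → ENNReal) (hψ : Measurable ψ) (a b c : ℝ) :
    ∫⁻ x in Ioc a b, ψ (x + c) = ∫⁻ y in Ioc (a+c) (b+c), ψ y := by
  have hmp := (measurePreserving_add_right (volume : Measure ℝ) c)
  have hs := setLIntegral_map (μ := (volume:Measure ℝ)) (s := Ioc (a+c) (b+c))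
      measurableSet_Ioc hψ (measurable_add_const c)
  rw [hmp.map_eq, Set.preimage_add_const_Ioc] at hs
  simp only [add_sub_cancel_right] at hs
  exact hs.symm

lemma eLpNorm_two_eq {α : Type*} [MeasurableSpace α] (μ : Measure α) (f : α → ℂ) :
    eLpNorm f 2 μ = (∫⁻ x, ((‖f x‖₊ : ENNReal)) ^ 2 ∂μ) ^ (1/2 : ℝ) := by
  rw [eLpNorm_eq_lintegral_rpow_enorm_toReal two_ne_zero ENNReal.ofNat_ne_top]
  congr 1
  apply lintegral_congr
  intro x
  rw [show ((2:ENNReal).toReal) = ((2:ℕ):ℝ) by simp, ENNReal.rpow_natCast, enorm_eq_nnnorm]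

lemma lint_sq_lt_top {α : Type*} [MeasurableSpace α] {μ : Measure α} {f : α → ℂ}
    (hf : MeasureTheory.MemLp f 2 μ) :
    ∫⁻ x, ((‖f x‖₊ : ENNReal)) ^ 2 ∂μ < ⊤ := by
  have h2 := hf.2
  rw [eLpNorm_two_eq] at h2
  by_contra h
  rw [not_lt, top_le_iff] at h
  rw [h, ENNReal.top_rpow_of_pos (by norm_num)] at h2
  exact (lt_irrefl _ h2)

lemma memLp_of_lint {α : Type*} [MeasurableSpace α] {μ : Measure α} {f : α → ℂ}
    (hm : AEStronglyMeasurable f μ)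
    (h : ∫⁻ x, ((‖f x‖₊ : ENNReal)) ^ 2 ∂μ < ⊤) : MeasureTheory.MemLp f 2 μ :=
  ⟨hm, by rw [eLpNorm_two_eq]; exact ENNReal.rpow_lt_top_of_nonneg (by norm_num) h.ne⟩



section FiberF

variable {F : ℝ × ℝ → ℂ}

lemma fiber_one (hF_meas : Measurable F) (hF_mem : MeasureTheory.MemLp F 2 muZ)
    (hF_p2_one : ∀ᵐ ω ∂muT, (∫ x in Set.Ioc (0:ℝ) 1, ‖F (ω, x)‖ ^ 2) = 1) :
    ∀ᵐ ω ∂muT, ∫⁻ x in Ioc (0:ℝ) 1, ((‖F (ω, x)‖₊ : ENNReal))^2 = 1 := by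
  filter_upwards [hF_p2_one] with ω h2
  have hmeas : Measurable fun x => ‖F (ω, x)‖^2 :=
    ((hF_meas.comp measurable_prodMk_left).norm.pow_const 2)
  have hnn : 0 ≤ᵐ[volume.restrict (Ioc (0:ℝ) 1)] fun x => ‖F (ω, x)‖^2 :=
    Filter.Eventually.of_forall fun x => sq_nonneg _
  rw [integral_eq_lintegral_of_nonneg_ae hnn hmeas.aestronglyMeasurable] at h2
  have hof : ∀ x : ℝ, ENNReal.ofReal (‖F (ω, x)‖^2) = ((‖F (ω, x)‖₊ : ENNReal))^2 := by
    intro x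
    rw [ENNReal.ofReal_pow (norm_nonneg _)]
    congr 1
    exact ofReal_norm_eq_enorm _
  simp only [hof] at h2
  rwa [ENNReal.toReal_eq_one_iff] at h2

lemma key_tonelli (hF_meas : Measurable F)
    (hfib : ∀ᵐ ω ∂muT, ∫⁻ x in Ioc (0:ℝ) 1, ((‖F (ω, x)‖₊ : ENNReal))^2 = 1)
    (α : ℝ → ℂ) (hα : Measurable α) :
    ∫⁻ p, ((‖α p.1 * F p‖₊ : ENNReal))^2 ∂muZ = ∫⁻ ω, ((‖α ω‖₊ : ENNReal))^2 ∂muT := by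
  have hmeasP : Measurable fun p : ℝ × ℝ => ((‖α p.1 * F p‖₊ : ENNReal))^2 :=
    ((hα.comp measurable_fst).mul hF_meas).nnnorm.coe_nnreal_ennreal.pow_const 2
  rw [muZ, lintegral_prod _ hmeasP.aemeasurable]
  have hsplit : ∀ ω : ℝ,
      (∫⁻ x, ((‖α ω * F (ω,x)‖₊ : ENNReal))^2 ∂(volume.restrict (Ioc (0:ℝ) 1)))
      = ((‖α ω‖₊ : ENNReal))^2 * ∫⁻ x in Ioc (0:ℝ) 1, ((‖F (ω,x)‖₊ : ENNReal))^2 := by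
    intro ω
    have hFm : Measurable fun x : ℝ => ((‖F (ω,x)‖₊ : ENNReal))^2 :=
      ((hF_meas.comp measurable_prodMk_left).nnnorm.coe_nnreal_ennreal.pow_const 2)
    rw [← lintegral_const_mul _ hFm]
    apply lintegral_congr
    intro x
    rw [nnnorm_mul]
    push_cast
    ring
  calc ∫⁻ ω, (∫⁻ x, ((‖α ω * F (ω,x)‖₊ : ENNReal))^2 ∂(volume.restrict (Ioc (0:ℝ) 1))) ∂muT
      = ∫⁻ ω, ((‖α ω‖₊ : ENNReal))^2 ∂muT := by
        apply lintegral_congr_ae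
        filter_upwards [hfib] with ω h
        rw [hsplit ω, h, mul_one]

lemma memLp_mul (hF_meas : Measurable F)
    (hfib : ∀ᵐ ω ∂muT, ∫⁻ x in Ioc (0:ℝ) 1, ((‖F (ω, x)‖₊ : ENNReal))^2 = 1)
    (α : ℝ → ℂ) (hα : Measurable α) (hα2 : MeasureTheory.MemLp α 2 muT) :
    MeasureTheory.MemLp (fun p : ℝ × ℝ => α p.1 * F p) 2 muZ := by
  have hm : AEStronglyMeasurable (fun p : ℝ × ℝ => α p.1 * F p) muZ :=
    ((hα.comp measurable_fst).mul hF_meas).aestronglyMeasurable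
  apply memLp_of_lint hm
  rw [key_tonelli hF_meas hfib α hα]
  exact lint_sq_lt_top hα2

lemma CF_isom (hF_meas : Measurable F)
    (hfib : ∀ᵐ ω ∂muT, ∫⁻ x in Ioc (0:ℝ) 1, ((‖F (ω, x)‖₊ : ENNReal))^2 = 1)
    (CF : L2T →L[ℂ] HZ)
    (hCF : ∀ (α : ℝ → ℂ), Measurable α → ∀ hα : MeasureTheory.MemLp α 2 muT,
      ⇑(CF (hα.toLp α)) =ᵐ[muZ] fun p : ℝ × ℝ => α p.1 * F p) :
    ∀ a : L2T, ‖CF a‖ = ‖a‖ := by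
  intro a
  obtain ⟨g, hgm, hgp, hag⟩ := exists_rep a
  have hgmem : MeasureTheory.MemLp g 2 muT := (Lp.memLp a).ae_eq hag
  have h1 := hCF g hgm hgmem
  rw [toLp_eq' hgmem hag] at h1
  rw [Lp.norm_def, Lp.norm_def, eLpNorm_congr_ae h1, eLpNorm_congr_ae hag,
    eLpNorm_two_eq, eLpNorm_two_eq, key_tonelli hF_meas hfib g hgm]

end FiberF



lemma CF_comm
    (m₀ : ℝ → ℂ) (hm_meas : Measurable m₀)
    {F : ℝ × ℝ → ℂ} (hF_meas : Measurable F) (hF_qp : QP F)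
    (hF_mem : MeasureTheory.MemLp F 2 muZ)
    (hfib : ∀ᵐ ω ∂muT, ∫⁻ x in Ioc (0:ℝ) 1, ((‖F (ω, x)‖₊ : ENNReal))^2 = 1)
    (Ut : HZ ≃ₗᵢ[ℂ] HZ) (hUt : IsUt Ut)
    (Tm : HZ →L[ℂ] HZ) (hTm : IsMulOp m₀ Tm)
    (hfix : Ut.symm (Tm (hF_mem.toLp F)) = hF_mem.toLp F)
    (S₀ : L2T →L[ℂ] L2T) (hS₀ : IsSOp m₀ S₀)
    (CF : L2T →L[ℂ] HZ)
    (hCF : ∀ (α : ℝ → ℂ), Measurable α → ∀ hα : MeasureTheory.MemLp α 2 muT,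
      ⇑(CF (hα.toLp α)) =ᵐ[muZ] fun p : ℝ × ℝ => α p.1 * F p)
    (a : L2T) : Ut (CF a) = CF (S₀ a) := by
  obtain ⟨g, hgm, hgp, hag, hSa⟩ := S_repr hS₀ a
  have hgmem : MeasureTheory.MemLp g 2 muT := (Lp.memLp a).ae_eq hag
  have hH'meas : Measurable (fun p : ℝ × ℝ => g p.1 * F p) :=
    (hgm.comp measurable_fst).mul hF_meas
  have hH'mem : MeasureTheory.MemLp (fun p : ℝ × ℝ => g p.1 * F p) 2 muZ :=
    memLp_mul hF_meas hfib g hgm hgmem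
  have hH'qp : QP (fun p : ℝ × ℝ => g p.1 * F p) := by
    constructor
    · intro ω x
      simp only
      rw [hgp ω, hF_qp.1 ω x]
    · intro ω x n
      simp only
      rw [hF_qp.2 ω x n]
      ring
  have hCFa : CF a = hH'mem.toLp _ := by
    apply Lp.ext
    have h1 := hCF g hgm hgmem
    rw [toLp_eq' hgmem hag] at h1
    exact h1.trans hH'mem.coeFn_toLp.symm
  have hUtF := hUt F hF_meas hF_qp hF_mem
  have hTmF' : ⇑(Tm (hF_mem.toLp F)) =ᵐ[muZ] fun p => m₀ p.1 * F p := by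
    filter_upwards [hTm (hF_mem.toLp F), hF_mem.coeFn_toLp] with p h1 h2
    rw [h1, h2]
  have hfix' : Tm (hF_mem.toLp F) = Ut (hF_mem.toLp F) := by
    have h := congrArg Ut hfix
    rwa [LinearIsometryEquiv.apply_symm_apply] at h
  have hBF : (fun p : ℝ × ℝ =>
      ((Real.sqrt 2 : ℝ) : ℂ)⁻¹ * (F (2 * p.1, p.2 / 2) +
        Complex.exp (-(Complex.I * (p.1 : ℂ))) * F (2 * p.1, (p.2 + 1) / 2)))
      =ᵐ[muZ] fun p => m₀ p.1 * F p := by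
    refine hUtF.symm.trans ?_
    rw [hfix'] at hTmF'
    exact hTmF'
  have hUtH' := hUt _ hH'meas hH'qp hH'mem
  have hmain : ⇑(Ut (CF a)) =ᵐ[muZ]
      fun p : ℝ × ℝ => (m₀ p.1 * g (2 * p.1)) * F p := by
    rw [hCFa]
    filter_upwards [hUtH', hBF] with p h1 h2
    rw [h1]
    have e1 : ((Real.sqrt 2 : ℝ) : ℂ)⁻¹ *
        (g (2 * p.1) * F (2 * p.1, p.2 / 2) +
          Complex.exp (-(Complex.I * (p.1 : ℂ))) * (g (2 * p.1) * F (2 * p.1, (p.2 + 1) / 2)))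
        = g (2 * p.1) * (((Real.sqrt 2 : ℝ) : ℂ)⁻¹ * (F (2 * p.1, p.2 / 2) +
            Complex.exp (-(Complex.I * (p.1 : ℂ))) * F (2 * p.1, (p.2 + 1) / 2))) := by
      ring
    rw [e1, h2]
    ring
  have hβm : Measurable (fun ω => m₀ ω * g (2 * ω)) :=
    hm_meas.mul (hgm.comp (measurable_const_mul 2))
  have hβmem : MeasureTheory.MemLp (fun ω => m₀ ω * g (2 * ω)) 2 muT :=
    (Lp.memLp (S₀ a)).ae_eq hSa
  have h2 := hCF _ hβm hβmem
  rw [toLp_eq' hβmem hSa] at h2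
  exact Lp.ext (hmain.trans h2.symm)



/-- the conjugate filter `m₁`. -/
def m1 (m₀ : ℝ → ℂ) (ω : ℝ) : ℂ :=
  Complex.exp (-(Complex.I * (ω : ℂ))) * (starRingEnd ℂ) (m₀ (ω + π))

lemma exp_neg_pi : Complex.exp (-((π:ℂ) * Complex.I)) = -1 := by
  rw [Complex.exp_neg, Complex.exp_pi_mul_I]
  norm_num

lemma exp_shift_pi (ω : ℝ) :
    Complex.exp (-(Complex.I * ((ω + π : ℝ) : ℂ))) = - Complex.exp (-(Complex.I * (ω:ℂ))) := by
  push_cast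
  rw [show -(Complex.I * ((ω:ℂ) + (π:ℂ))) = -(Complex.I * ω) + -((π:ℂ) * Complex.I) by ring,
    Complex.exp_add, exp_neg_pi]
  ring

lemma norm_exp_I (ω : ℝ) : ‖Complex.exp (-(Complex.I * (ω:ℂ)))‖ = 1 := by
  rw [
    show -(Complex.I * (ω:ℂ)) = ((-ω : ℝ):ℂ) * Complex.I by push_cast; ring,
    Complex.norm_exp_ofReal_mul_I]

lemma exp_mul_conj (ω : ℝ) :
    Complex.exp (-(Complex.I * (ω:ℂ))) * (starRingEnd ℂ) (Complex.exp (-(Complex.I * (ω:ℂ)))) = 1 := by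
  rw [Complex.mul_conj]
  have h := norm_exp_I ω
  rw [Complex.normSq_eq_norm_sq, h]
  norm_num

lemma m1_meas {m₀ : ℝ → ℂ} (hm : Measurable m₀) : Measurable (m1 m₀) := by
  apply Measurable.mul
  · exact (Complex.measurable_exp.comp ((Complex.measurable_ofReal.const_mul Complex.I).neg))
  · exact Complex.continuous_conj.measurable.comp (hm.comp (measurable_add_const π))

lemma m1_per {m₀ : ℝ → ℂ} (hm_per : ∀ ω, m₀ (ω + 2 * π) = m₀ ω) (ω : ℝ) :
    m1 m₀ (ω + 2 * π) = m1 m₀ ω := by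
  unfold m1
  have h1 : Complex.exp (-(Complex.I * ((ω + 2*π : ℝ) : ℂ))) = Complex.exp (-(Complex.I * (ω:ℂ))) := by
    have := exp_shift_pi (ω + π)
    rw [show ((ω + π) + π : ℝ) = (ω + 2*π : ℝ) by ring] at this
    rw [this, exp_shift_pi ω]
    ring
  rw [h1]
  rw [show ω + 2*π + π = (ω + π) + 2*π by ring]
  rw [hm_per]

lemma m1_shift {m₀ : ℝ → ℂ} (hm_per : ∀ ω, m₀ (ω + 2 * π) = m₀ ω) (ω : ℝ) :
    m1 m₀ (ω + π) = - Complex.exp (-(Complex.I * (ω:ℂ))) * (starRingEnd ℂ) (m₀ ω) := by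
  unfold m1
  have h2 : m₀ (ω + π + π) = m₀ ω := by
    rw [show ω + π + π = ω + 2*π by ring, hm_per]
  rw [exp_shift_pi ω, h2]

lemma m1_norm (m₀ : ℝ → ℂ) (ω : ℝ) : ‖m1 m₀ ω‖ = ‖m₀ (ω + π)‖ := by
  unfold m1
  rw [norm_mul, norm_exp_I, RCLike.norm_conj, one_mul]

lemma orth_S
    (m₀ : ℝ → ℂ) (hm_meas : Measurable m₀) (hm_per : ∀ ω, m₀ (ω + 2 * π) = m₀ ω)
    (S₀ : L2T →L[ℂ] L2T) (hS₀ : IsSOp m₀ S₀)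
    (S₁ : L2T →L[ℂ] L2T) (hS₁ : IsSOp (m1 m₀) S₁)
    (f g : L2T) : (inner ℂ (S₀ f) (S₁ g) : ℂ) = 0 := by
  obtain ⟨f', hf'm, hf'p, -, hSf⟩ := S_repr hS₀ f
  obtain ⟨g', hg'm, hg'p, -, hSg⟩ := S_repr hS₁ g
  set ψ : ℝ → ℂ :=
    fun ω => (starRingEnd ℂ) (m₀ ω * f' (2*ω)) * (m1 m₀ ω * g' (2*ω)) with hψdef
  have hψm : Measurable ψ := by
    apply Measurable.mul
    · exact Complex.continuous_conj.measurable.comp (hm_meas.mul (hf'm.comp (measurable_const_mul 2)))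
    · exact (m1_meas hm_meas).mul (hg'm.comp (measurable_const_mul 2))
  have hanti : ∀ x : ℝ, ψ (x + π) = - ψ x := by
    intro x
    simp only [hψdef]
    rw [show 2 * (x + π) = 2*x + 2*π by ring, hf'p, hg'p, m1_shift hm_per x]
    simp only [m1, map_mul]
    ring
  have hinner : (fun ω => (inner ℂ (⇑(S₀ f) ω) (⇑(S₁ g) ω) : ℂ)) =ᵐ[muT] ψ := by
    filter_upwards [hSf, hSg] with ω h1 h2
    rw [RCLike.inner_apply, h1, h2]; exact mul_comm _ _
  rw [L2.inner_def, integral_congr_ae hinner]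
  have hsm : ∫ ω, ψ ω ∂muT
      = ((ENNReal.ofReal (2*π))⁻¹).toReal • ∫ ω in Ioc (0:ℝ) (2*π), ψ ω := by
    rw [muT, integral_smul_measure]
  rw [hsm]
  have hInt : Integrable ψ muT := (L2.integrable_inner (𝕜 := ℂ) (S₀ f) (S₁ g)).congr hinner
  have hIntR : IntegrableOn ψ (Ioc (0:ℝ) (2*π)) volume := by
    rw [muT] at hInt
    exact (integrable_smul_measure cT_ne_zero cT_ne_top).mp hInt
  have hsplit : Ioc (0:ℝ) (2*π) = Ioc 0 π ∪ Ioc π (2*π) :=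
    (Set.Ioc_union_Ioc_eq_Ioc pi_pos.le (by linarith [pi_pos])).symm
  have hIseq : ∫ ω in Ioc (0:ℝ) (2*π), ψ ω
      = (∫ ω in Ioc (0:ℝ) π, ψ ω) + ∫ ω in Ioc π (2*π), ψ ω := by
    rw [hsplit]
    apply setIntegral_union (Set.Ioc_disjoint_Ioc_of_le le_rfl) measurableSet_Ioc
    · exact hIntR.mono_set (by rw [hsplit]; exact Set.subset_union_left)
    · exact hIntR.mono_set (by rw [hsplit]; exact Set.subset_union_right)
  have htr : ∫ ω in Ioc π (2*π), ψ ω = ∫ ω in Ioc (0:ℝ) π, ψ (ω + π) := by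
    have hmp := measurePreserving_add_right (volume : Measure ℝ) π
    have haesm : AEStronglyMeasurable ψ (Measure.map (fun x : ℝ => x + π) volume) := by
      rw [hmp.map_eq]
      exact hψm.aestronglyMeasurable
    have hs := setIntegral_map (μ := (volume : Measure ℝ)) (s := Ioc π (2*π))
      measurableSet_Ioc haesm (measurable_add_const π).aemeasurable
    rw [hmp.map_eq, Set.preimage_add_const_Ioc] at hs
    rw [hs, show π - π = (0:ℝ) by ring, show 2*π - π = π by ring]
  have hneg : ∫ ω in Ioc (0:ℝ) π, ψ (ω + π) = - ∫ ω in Ioc (0:ℝ) π, ψ ω := by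
    simp only [hanti]
    exact integral_neg _
  rw [hIseq, htr, hneg]
  simp



lemma mul_conj_self (z : ℂ) : z * (starRingEnd ℂ) z = ((‖z‖^2 : ℝ) : ℂ) := by
  rw [Complex.mul_conj, Complex.normSq_eq_norm_sq]

def Gfun (m f : ℝ → ℂ) (u : ℝ) : ℂ :=
  (1/2 : ℂ) * ((starRingEnd ℂ) (m (u/2)) * f (u/2) +
    (starRingEnd ℂ) (m (u/2 + π)) * f (u/2 + π))

lemma Gfun_meas {m f : ℝ → ℂ} (hm : Measurable m) (hf : Measurable f) :
    Measurable (Gfun m f) := by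
  unfold Gfun
  apply Measurable.const_mul
  apply Measurable.add
  · exact (Complex.continuous_conj.measurable.comp
      (hm.comp (measurable_id.div_const 2))).mul (hf.comp (measurable_id.div_const 2))
  · exact (Complex.continuous_conj.measurable.comp
      (hm.comp ((measurable_id.div_const 2).add_const π))).mul
      (hf.comp ((measurable_id.div_const 2).add_const π))

lemma Gfun_per {m f : ℝ → ℂ} (hm_per : ∀ ω, m (ω + 2 * π) = m ω)
    (hf_per : ∀ ω, f (ω + 2 * π) = f ω) (u : ℝ) :
    Gfun m f (u + 2 * π) = Gfun m f u := by
  unfold Gfun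
  rw [show (u + 2*π)/2 = u/2 + π by ring,
    show u/2 + π + π = u/2 + 2*π by ring, hm_per, hf_per]
  ring

lemma lint_restrict_lt_top {f : ℝ → ℂ} (hf : MeasureTheory.MemLp f 2 muT) :
    ∫⁻ u in Ioc (0:ℝ) (2*π), ((‖f u‖₊ : ENNReal))^2 < ⊤ := by
  have h := lint_sq_lt_top hf
  rw [muT, lintegral_smul_measure] at h
  by_contra hc
  rw [not_lt, top_le_iff] at hc
  rw [hc, smul_eq_mul, ENNReal.mul_top cT_ne_zero] at h
  exact lt_irrefl _ h

lemma memLp_half {f : ℝ → ℂ} (hfm : Measurable f) (hf : MeasureTheory.MemLp f 2 muT) :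
    MeasureTheory.MemLp (fun u => f (u/2)) 2 muT := by
  have hsm : AEStronglyMeasurable (fun u : ℝ => f (u/2)) muT :=
    (hfm.comp (measurable_id.div_const 2)).aestronglyMeasurable
  apply memLp_of_lint hsm
  rw [muT, lintegral_smul_measure]
  have hψ : Measurable fun v : ℝ => ((‖f v‖₊ : ENNReal))^2 :=
    hfm.nnnorm.coe_nnreal_ennreal.pow_const 2
  rw [lint_half _ hψ]
  have hle : ∫⁻ x in Ioc (0:ℝ) π, ((‖f x‖₊ : ENNReal))^2
      ≤ ∫⁻ u in Ioc (0:ℝ) (2*π), ((‖f u‖₊ : ENNReal))^2 :=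
    lintegral_mono_set (Set.Ioc_subset_Ioc_right (by linarith [pi_pos]))
  exact ENNReal.mul_lt_top cT_ne_top.lt_top
    (ENNReal.mul_lt_top (by norm_num) (lt_of_le_of_lt hle (lint_restrict_lt_top hf)))

lemma memLp_half_shift {f : ℝ → ℂ} (hfm : Measurable f) (hf : MeasureTheory.MemLp f 2 muT) :
    MeasureTheory.MemLp (fun u => f (u/2 + π)) 2 muT := by
  have hsm : AEStronglyMeasurable (fun u : ℝ => f (u/2 + π)) muT :=
    (hfm.comp ((measurable_id.div_const 2).add_const π)).aestronglyMeasurable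
  apply memLp_of_lint hsm
  rw [muT, lintegral_smul_measure]
  have hψ : Measurable fun v : ℝ => ((‖f (v + π)‖₊ : ENNReal))^2 :=
    (hfm.comp (measurable_add_const π)).nnnorm.coe_nnreal_ennreal.pow_const 2
  rw [lint_half _ hψ]
  rw [lint_shift _ (hfm.nnnorm.coe_nnreal_ennreal.pow_const 2) 0 π π, zero_add]
  have hle : ∫⁻ x in Ioc π (π + π), ((‖f x‖₊ : ENNReal))^2
      ≤ ∫⁻ u in Ioc (0:ℝ) (2*π), ((‖f u‖₊ : ENNReal))^2 := by
    apply lintegral_mono_set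
    apply Set.Ioc_subset_Ioc pi_pos.le (by linarith)
  exact ENNReal.mul_lt_top cT_ne_top.lt_top
    (ENNReal.mul_lt_top (by norm_num) (lt_of_le_of_lt hle (lint_restrict_lt_top hf)))

lemma Gfun_memLp {m f : ℝ → ℂ} (hmm : Measurable m) (C : ℝ) (hmC : ∀ ω, ‖m ω‖ ≤ C)
    (hfm : Measurable f) (hf : MeasureTheory.MemLp f 2 muT) :
    MeasureTheory.MemLp (Gfun m f) 2 muT := by
  have hsmA : AEStronglyMeasurable (fun u : ℝ => (starRingEnd ℂ) (m (u/2)) * f (u/2)) muT :=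
    ((Complex.continuous_conj.measurable.comp
        (hmm.comp (measurable_id.div_const 2))).mul
        (hfm.comp (measurable_id.div_const 2))).aestronglyMeasurable
  have hA : MeasureTheory.MemLp (fun u => (starRingEnd ℂ) (m (u/2)) * f (u/2)) 2 muT := by
    apply MeasureTheory.MemLp.of_le_mul (memLp_half hfm hf) hsmA (c := C)
    apply Filter.Eventually.of_forall
    intro u
    rw [norm_mul, RCLike.norm_conj]
    exact mul_le_mul_of_nonneg_right (hmC _) (norm_nonneg _)
  have hsmB : AEStronglyMeasurable
      (fun u : ℝ => (starRingEnd ℂ) (m (u/2 + π)) * f (u/2 + π)) muT :=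
    ((Complex.continuous_conj.measurable.comp
        (hmm.comp ((measurable_id.div_const 2).add_const π))).mul
        (hfm.comp ((measurable_id.div_const 2).add_const π))).aestronglyMeasurable
  have hB : MeasureTheory.MemLp
      (fun u => (starRingEnd ℂ) (m (u/2 + π)) * f (u/2 + π)) 2 muT := by
    apply MeasureTheory.MemLp.of_le_mul (memLp_half_shift hfm hf) hsmB (c := C)
    apply Filter.Eventually.of_forall
    intro u
    rw [norm_mul, RCLike.norm_conj]
    exact mul_le_mul_of_nonneg_right (hmC _) (norm_nonneg _)
  exact (hA.add hB).const_mul (1/2 : ℂ)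

lemma decomp
    (m₀ : ℝ → ℂ) (hm_meas : Measurable m₀) (hm_bdd : ∃ C, ∀ ω, ‖m₀ ω‖ ≤ C)
    (hm_per : ∀ ω, m₀ (ω + 2 * π) = m₀ ω)
    (hm_quad : ∀ᵐ ω ∂(volume : Measure ℝ), ‖m₀ ω‖ ^ 2 + ‖m₀ (ω + π)‖ ^ 2 = 2)
    (S₀ : L2T →L[ℂ] L2T) (hS₀ : IsSOp m₀ S₀)
    (S₁ : L2T →L[ℂ] L2T) (hS₁ : IsSOp (m1 m₀) S₁)
    (f : L2T) : ∃ g h : L2T, f = S₀ g + S₁ h := by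
  obtain ⟨C, hmC⟩ := hm_bdd
  obtain ⟨f', hf'm, hf'p, hff'⟩ := exists_rep f
  have hf'mem : MeasureTheory.MemLp f' 2 muT := (Lp.memLp f).ae_eq hff'
  have hGmem : MeasureTheory.MemLp (Gfun m₀ f') 2 muT :=
    Gfun_memLp hm_meas C hmC hf'm hf'mem
  have hm1C : ∀ ω, ‖m1 m₀ ω‖ ≤ C := fun ω => by rw [m1_norm]; exact hmC _
  have hHmem : MeasureTheory.MemLp (Gfun (m1 m₀) f') 2 muT :=
    Gfun_memLp (m1_meas hm_meas) C hm1C hf'm hf'mem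
  have hG := hS₀ (Gfun m₀ f') (Gfun_meas hm_meas hf'm) (Gfun_per hm_per hf'p) hGmem
  have hH := hS₁ (Gfun (m1 m₀) f') (Gfun_meas (m1_meas hm_meas) hf'm)
    (Gfun_per (m1_per hm_per) hf'p) hHmem
  refine ⟨hGmem.toLp _, hHmem.toLp _, ?_⟩
  apply Lp.ext
  have hq : ∀ᵐ ω ∂muT, ‖m₀ ω‖^2 + ‖m₀ (ω + π)‖^2 = 2 := ae_muT_of_ae_vol hm_quad
  have hadd := Lp.coeFn_add (S₀ (hGmem.toLp _)) (S₁ (hHmem.toLp _))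
  filter_upwards [hff', hq, hadd, hG, hH] with ω h1 h2 h3 h4 h5
  rw [h1, h3]
  simp only [Pi.add_apply]
  rw [h4, h5]
  have hA : m₀ ω * (starRingEnd ℂ) (m₀ ω) + m1 m₀ ω * (starRingEnd ℂ) (m1 m₀ ω)
      = 2 := by
    rw [mul_conj_self, mul_conj_self, m1_norm, ← Complex.ofReal_add, h2]
    norm_num
  have hB : m₀ ω * (starRingEnd ℂ) (m₀ (ω + π)) + m1 m₀ ω * (starRingEnd ℂ) (m1 m₀ (ω + π))
      = 0 := by
    rw [m1_shift hm_per ω]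
    simp only [m1, map_mul, map_neg, Complex.conj_conj]
    have hE := exp_mul_conj ω
    linear_combination (-(m₀ ω * (starRingEnd ℂ) (m₀ (ω+π)))) * hE
  simp only [Gfun, show 2 * ω / 2 = ω by ring]
  linear_combination (-(1/2 : ℂ) * f' ω) * hA + (-(1/2 : ℂ) * f' (ω + π)) * hB


end MRAaux

/-- Theorem 4.7, second part: let `F ∈ H_Z` satisfy `M̃(F) = F` and
`p₂(F) ≡ 1` a.e.  With `m₁(z) = z·conj(m₀(-z))`, `S₁f = m₁·(f∘sq)`, `L₀ = S₁(L²(𝕋))`,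
`V₀(F) = closure {π_Z(α)F : α ∈ L²(𝕋)}`, `Vₙ(F) = Ũⁿ(V₀(F))`, and
`Wₙ(F) = Vₙ(F) ⊖ V_{n+1}(F)`: then `V_{n+1}(F) ⊆ Vₙ(F)`, `C_F(S₀ⁿL²(𝕋)) = Vₙ(F)`,
`C_F(S₀ⁿL₀) = Wₙ(F)` for all `n ≥ 0`, and `C_F` is isometric. -/
theorem multiresolution_ladder_of_scaling
    (m₀ : ℝ → ℂ)
    (hm_meas : Measurable m₀) (hm_bdd : ∃ C, ∀ ω, ‖m₀ ω‖ ≤ C)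
    (hm_per : ∀ ω, m₀ (ω + 2 * π) = m₀ ω)
    (hm_quad : ∀ᵐ ω ∂(volume : Measure ℝ), ‖m₀ ω‖ ^ 2 + ‖m₀ (ω + π)‖ ^ 2 = 2)
    (F : ℝ × ℝ → ℂ) (hF_meas : Measurable F) (hF_qp : QP F)
    (hF_mem : MeasureTheory.MemLp F 2 muZ)
    (Ut : HZ ≃ₗᵢ[ℂ] HZ) (hUt : IsUt Ut)
    (Tm : HZ →L[ℂ] HZ) (hTm : IsMulOp m₀ Tm)
    (hfix : Ut.symm (Tm (hF_mem.toLp F)) = hF_mem.toLp F)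
    (hF_p2_one : ∀ᵐ ω ∂muT, (∫ x in Set.Ioc (0 : ℝ) 1, ‖F (ω, x)‖ ^ 2) = 1)
    (S₀ : L2T →L[ℂ] L2T) (hS₀ : IsSOp m₀ S₀)
    (S₁ : L2T →L[ℂ] L2T)
    (hS₁ : IsSOp (fun ω => Complex.exp (-(Complex.I * (ω : ℂ))) *
      (starRingEnd ℂ) (m₀ (ω + π))) S₁)
    (CF : L2T →L[ℂ] HZ)
    (hCF : ∀ (α : ℝ → ℂ), Measurable α → ∀ hα : MeasureTheory.MemLp α 2 muT,
      ⇑(CF (hα.toLp α)) =ᵐ[muZ] fun p : ℝ × ℝ => α p.1 * F p) :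
    (∀ n : ℕ,
      (⇑Ut)^[n + 1] '' closure (Set.range ⇑CF) ⊆ (⇑Ut)^[n] '' closure (Set.range ⇑CF)) ∧
    (∀ n : ℕ,
      ⇑CF '' Set.range ⇑(S₀ ^ n) = (⇑Ut)^[n] '' closure (Set.range ⇑CF)) ∧
    (∀ n : ℕ,
      ⇑CF '' (⇑(S₀ ^ n) '' Set.range ⇑S₁) =
        {v ∈ (⇑Ut)^[n] '' closure (Set.range ⇑CF) |
          ∀ w ∈ (⇑Ut)^[n + 1] '' closure (Set.range ⇑CF), (inner ℂ w v : ℂ) = 0}) ∧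
    ∀ α : L2T, ‖CF α‖ = ‖α‖ := by
  classical
  -- analytic facts
  have hfib := MRAaux.fiber_one hF_meas hF_mem hF_p2_one
  have hiso : ∀ a : L2T, ‖CF a‖ = ‖a‖ := MRAaux.CF_isom hF_meas hfib CF hCF
  have hS₁' : IsSOp (MRAaux.m1 m₀) S₁ := hS₁
  have horth : ∀ a b : L2T, (inner ℂ (S₀ a) (S₁ b) : ℂ) = 0 :=
    MRAaux.orth_S m₀ hm_meas hm_per S₀ hS₀ S₁ hS₁'
  have hdecomp : ∀ β : L2T, ∃ g h : L2T, β = S₀ g + S₁ h :=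
    MRAaux.decomp m₀ hm_meas hm_bdd hm_per hm_quad S₀ hS₀ S₁ hS₁'
  have hcomm : ∀ a : L2T, Ut (CF a) = CF (S₀ a) :=
    MRAaux.CF_comm m₀ hm_meas hF_meas hF_qp hF_mem hfib Ut hUt Tm hTm hfix S₀ hS₀ CF hCF
  -- CF as a linear isometry
  let isoCF : L2T →ₗᵢ[ℂ] HZ := ⟨CF.toLinearMap, hiso⟩
  have hinnCF : ∀ a b : L2T, (inner ℂ (CF a) (CF b) : ℂ) = inner ℂ a b := fun a b =>
    isoCF.inner_map_map a b
  have hclosed : closure (Set.range ⇑CF) = Set.range ⇑CF := by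
    have h1 : IsClosed (Set.range ⇑isoCF) :=
      isoCF.isometry.isClosedEmbedding.isClosed_range
    have h2 : Set.range ⇑isoCF = Set.range ⇑CF := rfl
    rw [h2] at h1
    exact h1.closure_eq
  -- iterates
  have hpow : ∀ (n : ℕ) (a : L2T), CF ((S₀ ^ n) a) = (⇑Ut)^[n] (CF a) := by
    intro n
    induction n with
    | zero => intro a; simp
    | succ n ih =>
      intro a
      rw [pow_succ]
      have h1 : (S₀ ^ n * S₀) a = (S₀ ^ n) (S₀ a) := rfl
      rw [h1, ih (S₀ a), ← hcomm a, Function.iterate_succ_apply]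
  -- goal 2 core
  have hV : ∀ n : ℕ, ⇑CF '' Set.range ⇑(S₀ ^ n) = (⇑Ut)^[n] '' Set.range ⇑CF := by
    intro n
    ext v
    constructor
    · rintro ⟨_, ⟨a, rfl⟩, rfl⟩
      exact ⟨CF a, ⟨a, rfl⟩, (hpow n a).symm⟩
    · rintro ⟨_, ⟨a, rfl⟩, rfl⟩
      exact ⟨(S₀ ^ n) a, ⟨a, rfl⟩, hpow n a⟩
  -- goal 1
  have hUtsub : ⇑Ut '' Set.range ⇑CF ⊆ Set.range ⇑CF := by
    rintro _ ⟨_, ⟨a, rfl⟩, rfl⟩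
    exact ⟨S₀ a, (hcomm a).symm⟩
  refine ⟨?_, ?_, ?_, hiso⟩
  · intro n
    rw [hclosed, Function.iterate_succ, Set.image_comp]
    exact Set.image_mono hUtsub
  · intro n
    rw [hclosed]
    exact hV n
  · -- goal 3
    have W0 : ⇑CF '' Set.range ⇑S₁
        = {v ∈ Set.range ⇑CF | ∀ w ∈ ⇑Ut '' Set.range ⇑CF, (inner ℂ w v : ℂ) = 0} := by
      ext v
      constructor
      · rintro ⟨_, ⟨b, rfl⟩, rfl⟩
        refine ⟨⟨S₁ b, rfl⟩, ?_⟩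
        rintro w ⟨_, ⟨a, rfl⟩, rfl⟩
        rw [hcomm a, hinnCF]
        exact horth a b
      · rintro ⟨⟨β, rfl⟩, hv⟩
        obtain ⟨g, h, rfl⟩ := hdecomp β
        have h0 : ∀ a : L2T, (inner ℂ (S₀ a) (S₀ g + S₁ h) : ℂ) = 0 := by
          intro a
          have h1 := hv (Ut (CF a)) ⟨CF a, ⟨a, rfl⟩, rfl⟩
          rwa [hcomm a, hinnCF] at h1
        have hg0 : S₀ g = 0 := by
          have h1 := h0 g
          rw [inner_add_right, horth g h, add_zero] at h1
          exact inner_self_eq_zero.mp h1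
        rw [hg0, zero_add]
        exact ⟨S₁ h, ⟨h, rfl⟩, rfl⟩
    have Wstep : ∀ s t : Set HZ,
        {v ∈ ⇑Ut '' s | ∀ w ∈ ⇑Ut '' t, (inner ℂ w v : ℂ) = 0}
          = ⇑Ut '' {v ∈ s | ∀ w ∈ t, (inner ℂ w v : ℂ) = 0} := by
      intro s t
      ext v
      constructor
      · rintro ⟨⟨u, hu, rfl⟩, hperp⟩
        refine ⟨u, ⟨hu, ?_⟩, rfl⟩
        intro w hw
        have h1 := hperp (Ut w) ⟨w, hw, rfl⟩
        rwa [LinearIsometryEquiv.inner_map_map] at h1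
      · rintro ⟨u, ⟨hu, hperp⟩, rfl⟩
        refine ⟨⟨u, hu, rfl⟩, ?_⟩
        rintro w ⟨w', hw', rfl⟩
        rw [LinearIsometryEquiv.inner_map_map]
        exact hperp w' hw'
    have hL : ∀ n : ℕ, ⇑CF '' (⇑(S₀ ^ n) '' Set.range ⇑S₁)
        = (⇑Ut)^[n] '' (⇑CF '' Set.range ⇑S₁) := by
      intro n
      ext v
      constructor
      · rintro ⟨_, ⟨_, ⟨b, rfl⟩, rfl⟩, rfl⟩
        exact ⟨CF (S₁ b), ⟨S₁ b, ⟨b, rfl⟩, rfl⟩, (hpow n (S₁ b)).symm⟩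
      · rintro ⟨_, ⟨_, ⟨b, rfl⟩, rfl⟩, rfl⟩
        exact ⟨(S₀ ^ n) (S₁ b), ⟨S₁ b, ⟨b, rfl⟩, rfl⟩, hpow n (S₁ b)⟩
    have claim : ∀ n : ℕ,
        {v ∈ (⇑Ut)^[n] '' Set.range ⇑CF |
          ∀ w ∈ (⇑Ut)^[n + 1] '' Set.range ⇑CF, (inner ℂ w v : ℂ) = 0}
        = (⇑Ut)^[n] '' {v ∈ Set.range ⇑CF |
            ∀ w ∈ ⇑Ut '' Set.range ⇑CF, (inner ℂ w v : ℂ) = 0} := by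
      intro n
      induction n with
      | zero => simp
      | succ n ih =>
        have e1 : (⇑Ut)^[n + 1] = ⇑Ut ∘ (⇑Ut)^[n] := Function.iterate_succ' ⇑Ut n
        have e2 : (⇑Ut)^[n + 1 + 1] = ⇑Ut ∘ (⇑Ut)^[n + 1] := Function.iterate_succ' ⇑Ut (n + 1)
        rw [e1, e2, Set.image_comp (⇑Ut) ((⇑Ut)^[n]), Set.image_comp (⇑Ut) ((⇑Ut)^[n + 1]),
          Wstep ((⇑Ut)^[n] '' Set.range ⇑CF) ((⇑Ut)^[n + 1] '' Set.range ⇑CF), ih,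
          ← Set.image_comp]
    intro n
    rw [hclosed, claim n, ← W0, ← hL n]


end
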